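/- arXiv:2007.01352 — 3 statements merged into one kernel-verified Lean document; each statement's English description precedes it below -/
import Mathlib

section
/- Let (M,d) be a metric space, G a finite group acting continuously on M, and Z ⊆ M a finite set with g·Z = Z for all g ∈ G. Fix p∞ ∈ Z, and suppose there exist a real number η > 0 and a continuous map α : [0,η] → M such that d(p∞, α(t)) = t for all t ∈ [0,η] and α(t) ∉ Z for all t ∈ (0,η]. Then for every n ≥ 1 the projection π : C_{n+1}^G(M∖Z) → C_n^G(M∖Z) forgetting the last coordinate admits a continuous section s (that is, s is continuous and π ∘ s = id); explicitly, one may take s(p₁,…,pₙ) = (p₁,…,pₙ, α(min(η, ½ min{ d(p∞, g·pᵢ) : 1 ≤ i ≤ n, g ∈ G }))). -/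
/-- The orbit configuration space `C_n^G(M ∖ Z)`: tuples of `n` points of `M ∖ Z` such that
`pᵢ ≠ g • pⱼ` for all `g ∈ G` and `i ≠ j`, topologized as a subspace of `Mⁿ`. -/
abbrev OrbitConf (G : Type*) [Group G] (M : Type*) [MulAction G M] (Z : Set M) (n : ℕ) :
    Type _ :=
  {p : Fin n → M // (∀ i, p i ∉ Z) ∧ ∀ (i j : Fin n) (g : G), i ≠ j → p i ≠ g • p j}

/-- The projection `C_{n+1}^G(M ∖ Z) → C_n^G(M ∖ Z)` forgetting the last coordinate. -/
def orbitConfProj {G : Type*} [Group G] {M : Type*} [MulAction G M] {Z : Set M} {n : ℕ}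
    (p : OrbitConf G M Z (n + 1)) : OrbitConf G M Z n :=
  ⟨fun i => p.val i.castSucc,
    fun i => p.2.1 i.castSucc,
    fun i j g hij => p.2.2 i.castSucc j.castSucc g
      (fun h => hij (Fin.castSucc_injective n h))⟩

/-- If `G` is a finite group acting continuously on a metric space `M`, `Z` a finite
`G`-stable subset, `pinf ∈ Z`, and there is a continuous path `α : [0, η] → M` emanating
from `pinf` with `d(pinf, α t) = t` which avoids `Z` for `t ∈ (0, η]`, then for all `n ≥ 1`
the projection `C_{n+1}^G(M ∖ Z) → C_n^G(M ∖ Z)` admits a continuous section. -/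
theorem orbitConfProj_has_continuous_section
    {G : Type*} [Group G] [Finite G] {M : Type*} [MetricSpace M] [MulAction G M]
    (hcont : ∀ g : G, Continuous fun x : M => g • x)
    (Z : Set M) (hZfin : Z.Finite) (hZstab : ∀ g : G, (fun x => g • x) '' Z = Z)
    (pinf : M) (hpinf : pinf ∈ Z)
    (η : ℝ) (hη : 0 < η) (α : ℝ → M) (hα : ContinuousOn α (Set.Icc 0 η))
    (hdist : ∀ t ∈ Set.Icc (0 : ℝ) η, dist pinf (α t) = t)
    (hαZ : ∀ t ∈ Set.Ioc (0 : ℝ) η, α t ∉ Z) :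
    ∀ n : ℕ, 1 ≤ n →
      ∃ s : OrbitConf G M Z n → OrbitConf G M Z (n + 1),
        Continuous s ∧ orbitConfProj ∘ s = id := by
  intro n hn
  have := Fintype.ofFinite G
  haveI : NeZero n := ⟨by omega⟩
  -- orbits avoid Z
  have horb : ∀ (p : OrbitConf G M Z n) (i : Fin n) (g : G), g • p.1 i ∉ Z := by
    intro p i g hmem
    apply p.2.1 i
    have : g⁻¹ • (g • p.1 i) ∈ (fun x => g⁻¹ • x) '' Z := ⟨_, hmem, rfl⟩
    rw [hZstab g⁻¹] at this
    simpa using this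
  -- the minimal distance function
  set D : OrbitConf G M Z n → ℝ := fun p =>
    (Finset.univ : Finset (Fin n × G)).inf' Finset.univ_nonempty
      (fun x => dist pinf (x.2 • p.1 x.1)) with hD
  have hDpos : ∀ p, 0 < D p := by
    intro p
    rw [hD, Finset.lt_inf'_iff]
    intro x _
    rw [dist_pos]
    intro h
    exact horb p x.1 x.2 (h ▸ hpinf)
  have hDle : ∀ p (i : Fin n) (g : G), D p ≤ dist pinf (g • p.1 i) := by
    intro p i g
    exact Finset.inf'_le _ (Finset.mem_univ (i, g))
  set r : OrbitConf G M Z n → ℝ := fun p => min η (D p / 2) with hr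
  have hrpos : ∀ p, 0 < r p := fun p => lt_min hη (by linarith [hDpos p])
  have hrle : ∀ p, r p ≤ η := fun p => min_le_left _ _
  have hrIcc : ∀ p, r p ∈ Set.Icc (0 : ℝ) η := fun p => ⟨(hrpos p).le, hrle p⟩
  -- key distance estimate
  have hkey : ∀ (p : OrbitConf G M Z n) (i : Fin n) (g : G), α (r p) ≠ g • p.1 i := by
    intro p i g h
    have h1 : dist pinf (α (r p)) = r p := hdist _ (hrIcc p)
    have h2 : D p ≤ dist pinf (g • p.1 i) := hDle p i g
    rw [h, h1] at *
    have : r p ≤ D p / 2 := min_le_right _ _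
    linarith [hDpos p]
  refine ⟨fun p => ⟨Fin.snoc p.1 (α (r p)), ?_, ?_⟩, ?_, ?_⟩
  · intro i
    refine Fin.lastCases ?_ ?_ i
    · rw [Fin.snoc_last]
      exact hαZ _ ⟨hrpos p, hrle p⟩
    · intro i
      rw [Fin.snoc_castSucc]
      exact p.2.1 i
  · intro i j g hij
    rcases Fin.eq_castSucc_or_eq_last i with ⟨i', rfl⟩ | rfl <;>
      rcases Fin.eq_castSucc_or_eq_last j with ⟨j', rfl⟩ | rfl
    · rw [Fin.snoc_castSucc, Fin.snoc_castSucc]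
      exact p.2.2 i' j' g (fun h => hij (congrArg Fin.castSucc h))
    · rw [Fin.snoc_castSucc, Fin.snoc_last]
      intro h
      exact hkey p i' g⁻¹ (by rw [h, inv_smul_smul])
    · rw [Fin.snoc_last, Fin.snoc_castSucc]
      exact hkey p j' g
    · exact absurd rfl hij
  · -- continuity
    have hDc : Continuous D := by
      apply Continuous.finset_inf'_apply
      intro x _
      exact continuous_const.dist ((hcont x.2).comp
        ((continuous_apply x.1).comp continuous_subtype_val))
    have hrc : Continuous r := continuous_const.min (hDc.div_const 2)
    have hαr : Continuous fun p => α (r p) := hα.comp_continuous hrc hrIcc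
    apply Continuous.subtype_mk
    apply continuous_pi
    intro k
    refine Fin.lastCases ?_ ?_ k
    · simpa using hαr
    · intro k
      simpa [Function.comp_def] using (continuous_apply k).comp continuous_subtype_val
  · funext p
    apply Subtype.ext
    funext i
    simp [orbitConfProj]
end

section
/- Let S be a closed surface (a compact, connected, Hausdorff, second-countable topological manifold of dimension 2 without boundary), let Y ⊆ S be a finite set, and let f be a self-homeomorphism of the subspace S∖Y. Then there exists a unique self-homeomorphism F of S extending f, i.e., such that F(x) = f(x) for every x ∈ S∖Y. -/
open Set Filter Topology Metric

/-- A punctured ball in `ℝ²` is connected. -/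
private lemma punctured_ball_connected (c : EuclideanSpace ℝ (Fin 2)) {r : ℝ} (hr : 0 < r) :
    IsConnected (ball c r \ {c}) := by
  have hrank : 1 < Module.rank ℝ (EuclideanSpace ℝ (Fin 2)) := by
    have h2 : Module.finrank ℝ (EuclideanSpace ℝ (Fin 2)) = 2 := finrank_euclideanSpace_fin
    rw [← Module.finrank_eq_rank, h2]
    exact_mod_cast one_lt_two
  have h0 : IsConnected ({(0 : EuclideanSpace ℝ (Fin 2))}ᶜ : Set (EuclideanSpace ℝ (Fin 2))) :=
    isConnected_compl_singleton_of_one_lt_rank hrank 0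
  set e := OpenPartialHomeomorph.univBall c r with he
  have hsrc : e.source = univ := OpenPartialHomeomorph.univBall_source c r
  have htgt : e.target = ball c r := OpenPartialHomeomorph.univBall_target c hr
  have hcont : ContinuousOn e ({(0 : EuclideanSpace ℝ (Fin 2))}ᶜ) :=
    e.continuousOn.mono (by rw [hsrc]; exact subset_univ _)
  have himg : e '' ({(0 : EuclideanSpace ℝ (Fin 2))}ᶜ) = ball c r \ {c} := by
    have hinj : InjOn e univ := by rw [← hsrc]; exact e.injOn
    have h1 : e '' univ = ball c r := by
      rw [← hsrc, e.image_source_eq_target, htgt]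
    have h2 : e 0 = c := OpenPartialHomeomorph.univBall_apply_zero c r
    rw [compl_eq_univ_diff, hinj.image_diff_subset (subset_univ _), h1, image_singleton, h2]
  rw [← himg]
  exact h0.image e hcont

/-- Every nonempty open subset of a (charted) surface is infinite. -/
private lemma surface_open_infinite {S : Type*} [TopologicalSpace S]
    [ChartedSpace (EuclideanSpace ℝ (Fin 2)) S]
    {U : Set S} (hU : IsOpen U) (hne : U.Nonempty) : U.Infinite := by
  obtain ⟨x, hx⟩ := hne
  set φ := chartAt (EuclideanSpace ℝ (Fin 2)) x with hφ
  have hxs : x ∈ φ.source := mem_chart_source _ x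
  set V := U ∩ φ.source with hV
  have hVopen : IsOpen V := hU.inter φ.open_source
  have hVsub : V ⊆ φ.source := inter_subset_right
  have himg : IsOpen (φ '' V) := φ.isOpen_image_of_subset_source hVopen hVsub
  have hmem : φ x ∈ φ '' V := mem_image_of_mem _ ⟨hx, hxs⟩
  haveI : NeBot (𝓝[≠] (φ x)) := by
    haveI := Module.punctured_nhds_neBot ℝ (EuclideanSpace ℝ (Fin 2))
    infer_instance
  have hinf : (φ '' V).Infinite := infinite_of_mem_nhds (φ x) (himg.mem_nhds hmem)
  exact (hinf.of_image φ).mono inter_subset_left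

/-- The complement of a finite set in a surface is dense. -/
private lemma surface_dense_compl {S : Type*} [TopologicalSpace S]
    [ChartedSpace (EuclideanSpace ℝ (Fin 2)) S]
    {Y : Set S} (hY : Y.Finite) : Dense (Yᶜ : Set S) := by
  rw [dense_iff_inter_open]
  intro U hUo hUne
  by_contra hempty
  rw [not_nonempty_iff_eq_empty] at hempty
  have hUY : U ⊆ Y := by
    intro u hu
    by_contra huY
    exact absurd hempty (Set.nonempty_iff_ne_empty.1 ⟨u, hu, huY⟩)
  exact surface_open_infinite hUo hUne (hY.subset hUY)

/-- Points of `Y` in a surface have arbitrarily small neighborhoods `U` such that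
`U ∩ Yᶜ` is connected. -/
private lemma exists_connected_punctured_nhd {S : Type*} [TopologicalSpace S] [T1Space S]
    [ChartedSpace (EuclideanSpace ℝ (Fin 2)) S]
    {Y : Set S} (hY : Y.Finite) {y : S} (hyY : y ∈ Y) {N : Set S} (hN : N ∈ 𝓝 y) :
    ∃ U ∈ 𝓝 y, U ⊆ N ∧ IsConnected ((U ∩ Yᶜ : Set S)) := by
  set φ := chartAt (EuclideanSpace ℝ (Fin 2)) y with hφ
  have hy : y ∈ φ.source := mem_chart_source _ y
  set O := interior N ∩ φ.source ∩ (Y \ {y})ᶜ with hO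
  have hOopen : IsOpen O :=
    ((isOpen_interior.inter φ.open_source).inter hY.diff.isClosed.isOpen_compl)
  have hyO : y ∈ O := ⟨⟨mem_interior_iff_mem_nhds.2 hN, hy⟩, by simp⟩
  have hOsrc : O ⊆ φ.source := fun x hx => hx.1.2
  have himg : IsOpen (φ '' O) := φ.isOpen_image_of_subset_source hOopen hOsrc
  obtain ⟨r, hr, hball⟩ := Metric.isOpen_iff.1 himg (φ y) (mem_image_of_mem _ hyO)
  have hball_tgt : ball (φ y) r ⊆ φ.target := fun u hu => by
    obtain ⟨o, hoO, rfl⟩ := hball hu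
    exact φ.map_source (hOsrc hoO)
  set U := φ.symm '' ball (φ y) r with hU
  have hUO : U ⊆ O := by
    rintro _ ⟨u, hu, rfl⟩
    obtain ⟨o, hoO, rfl⟩ := hball hu
    rwa [φ.left_inv (hOsrc hoO)]
  have hUopen : IsOpen U :=
    φ.symm.isOpen_image_of_subset_source isOpen_ball (by rwa [φ.symm_source])
  have hyU : y ∈ U := ⟨φ y, mem_ball_self hr, φ.left_inv hy⟩
  have hUN : U ⊆ N := fun x hx => interior_subset (hUO hx).1.1
  have hkey : (U ∩ Yᶜ : Set S) = φ.symm '' (ball (φ y) r \ {φ y}) := by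
    ext x
    constructor
    · rintro ⟨⟨u, hu, rfl⟩, hxY⟩
      refine ⟨u, ⟨hu, ?_⟩, rfl⟩
      intro huy
      rw [mem_singleton_iff] at huy
      subst huy
      exact hxY (by rwa [φ.left_inv hy])
    · rintro ⟨u, ⟨hu, hne⟩, rfl⟩
      refine ⟨⟨u, hu, rfl⟩, ?_⟩
      have hmemO : φ.symm u ∈ O := hUO ⟨u, hu, rfl⟩
      have hne' : φ.symm u ≠ y := by
        intro hEq
        apply hne
        rw [mem_singleton_iff, ← φ.right_inv (hball_tgt hu), hEq]
      intro hxY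
      exact hmemO.2 ⟨hxY, hne'⟩
  have hconn : IsConnected (φ.symm '' (ball (φ y) r \ {φ y})) := by
    refine (punctured_ball_connected (φ y) hr).image _ (φ.symm.continuousOn.mono ?_)
    rw [φ.symm_source]
    exact diff_subset.trans hball_tgt
  exact ⟨U, hUopen.mem_nhds hyU, hUN, hkey ▸ hconn⟩

/-- Around each point of a finite set in a T2 space one can choose pairwise
disjoint open neighborhoods. -/
private lemma finite_t2_separation {S : Type*} [TopologicalSpace S] [T2Space S]
    {Y : Set S} (hY : Y.Finite) :
    ∃ W : S → Set S, (∀ z, IsOpen (W z)) ∧ (∀ z ∈ Y, z ∈ W z) ∧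
      ∀ z ∈ Y, ∀ w ∈ Y, z ≠ w → Disjoint (W z) (W w) := by
  classical
  choose! A B hAo hBo hzA hwB hd using fun (z w : S) (h : z ≠ w) => t2_separation h
  refine ⟨fun z => ⋂ w ∈ hY.toFinset.erase z, (A z w ∩ B w z), ?_, ?_, ?_⟩
  · intro z
    exact isOpen_biInter_finset fun w hw =>
      (hAo z w (Finset.ne_of_mem_erase hw).symm).inter
        (hBo w z (Finset.ne_of_mem_erase hw))
  · intro z _
    refine mem_iInter₂.2 fun w hw => ?_
    have hne : z ≠ w := (Finset.ne_of_mem_erase hw).symm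
    exact ⟨hzA z w hne, hwB w z hne.symm⟩
  · intro z hz w hw hzw
    have hwmem : w ∈ hY.toFinset.erase z :=
      Finset.mem_erase.2 ⟨hzw.symm, hY.mem_toFinset.2 hw⟩
    have hzmem : z ∈ hY.toFinset.erase w :=
      Finset.mem_erase.2 ⟨hzw, hY.mem_toFinset.2 hz⟩
    refine Set.disjoint_left.2 fun x hx hx' => ?_
    have h1 : x ∈ A z w := (mem_iInter₂.1 hx w hwmem).1
    have h2 : x ∈ B z w := (mem_iInter₂.1 hx' z hzmem).2
    exact Set.disjoint_left.1 (hd z w hzw) h1 h2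

/-- Any self-homeomorphism of a compact surface minus a finite set of points extends
to a continuous self-map of the surface. -/
private lemma exists_continuous_extension (S : Type*) [TopologicalSpace S] [CompactSpace S]
    [T2Space S] [ChartedSpace (EuclideanSpace ℝ (Fin 2)) S]
    (Y : Set S) (hY : Y.Finite)
    (f : (Yᶜ : Set S) ≃ₜ (Yᶜ : Set S)) :
    ∃ g : S → S, Continuous g ∧ ∀ x : (Yᶜ : Set S), g (x : S) = (f x : S) := by
  classical
  have hYo : IsOpen (Yᶜ : Set S) := hY.isClosed.isOpen_compl
  have hdense : Dense (Yᶜ : Set S) := surface_dense_compl hY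
  set ι : (Yᶜ : Set S) → S := Subtype.val with hι
  set h : (Yᶜ : Set S) → S := fun x => (f x : S) with hh
  have hcont_h : Continuous h := continuous_subtype_val.comp f.continuous
  obtain ⟨W, hWo, hWmem, hWdisj⟩ := finite_t2_separation hY
  -- the key convergence fact
  have key : ∀ y ∈ Y, ∃ z ∈ Y, Tendsto h (comap ι (𝓝 y)) (𝓝 z) := by
    intro y hyY
    set Fy := comap ι (𝓝 y) with hFydef
    haveI hFy : Fy.NeBot := mem_closure_iff_comap_neBot.1 (hdense y)
    set G := map h Fy with hGdef
    haveI hG : G.NeBot := hFy.map h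
    -- every cluster point of G lies in Y
    have hclusY : ∀ z, ClusterPt z G → z ∈ Y := by
      intro z hz
      by_contra hzY
      set a : (Yᶜ : Set S) := ⟨z, hzY⟩ with ha
      have hmap : map ι (𝓝 a) = 𝓝 z := hYo.isOpenEmbedding_subtypeVal.map_nhds_eq a
      have h1 : NeBot (𝓝 a ⊓ map f Fy) := by
        rw [← Filter.map_neBot_iff ι, Filter.map_inf Subtype.val_injective, hmap,
          Filter.map_map]
        exact hz
      have h2 : NeBot (𝓝 (f.symm a) ⊓ Fy) := by
        have hmapped := h1.map f.symm
        rw [Filter.map_inf f.symm.injective, f.symm.map_nhds_eq, Filter.map_map] at hmapped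
        have hid : (⇑f.symm ∘ ⇑f) = id := funext fun x => f.symm_apply_apply x
        rwa [hid, Filter.map_id] at hmapped
      have h3 : NeBot (𝓝 (ι (f.symm a)) ⊓ (𝓝 y ⊓ 𝓟 (Yᶜ : Set S))) := by
        have hmapped := h2.map ι
        rwa [Filter.map_inf Subtype.val_injective,
          hYo.isOpenEmbedding_subtypeVal.map_nhds_eq, hFydef, Filter.map_comap,
          Subtype.range_coe] at hmapped
      have hne : (ι (f.symm a)) ≠ y := by
        intro hEq
        exact (f.symm a).2 (by rw [hι] at hEq; rw [← hEq] at hyY; exact hyY)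
      have hdisj := disjoint_nhds_nhds.2 hne
      have hle : 𝓝 (ι (f.symm a)) ⊓ (𝓝 y ⊓ 𝓟 (Yᶜ : Set S)) ≤ 𝓝 (ι (f.symm a)) ⊓ 𝓝 y :=
        inf_le_inf_left _ inf_le_left
      exact absurd (hdisj.eq_bot) (by
        have := neBot_of_le hle
        exact this.ne)
    -- cluster points are unique
    have huniq : ∀ z₁ z₂, ClusterPt z₁ G → ClusterPt z₂ G → z₁ = z₂ := by
      intro z₁ z₂ hc₁ hc₂
      have hz₁Y := hclusY z₁ hc₁
      have hz₂Y := hclusY z₂ hc₂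
      -- find a connected member of G inside the union of the W's
      have hK : IsCompact ((⋃ z ∈ Y, W z)ᶜ) :=
        ((isOpen_biUnion fun z _ => hWo z).isClosed_compl).isCompact
      have hdisjG : Disjoint (𝓝ˢ ((⋃ z ∈ Y, W z)ᶜ)) G := by
        rw [hK.disjoint_nhdsSet_left]
        intro x hx
        have hxY : x ∉ Y := fun hxY => hx (mem_biUnion hxY (hWmem x hxY))
        by_contra hnd
        rw [← clusterPt_iff_not_disjoint] at hnd
        exact hxY (hclusY x hnd)
      obtain ⟨T, hT, A, hA, hTA⟩ := Filter.disjoint_iff.1 hdisjG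
      have hKT : ((⋃ z ∈ Y, W z)ᶜ : Set S) ⊆ T := fun x hx =>
        mem_of_mem_nhds (mem_nhdsSet_iff_forall.1 hT x hx)
      have hAW : A ⊆ ⋃ z ∈ Y, W z := by
        intro x hx
        by_contra hxU
        exact Set.disjoint_left.1 hTA (hKT hxU) hx
      obtain ⟨N, hN, hNsub⟩ := Filter.mem_comap.1 (Filter.mem_map.1 hA)
      obtain ⟨U, hUnhd, hUN, hUconn⟩ := exists_connected_punctured_nhd hY hyY hN
      set C := h '' (ι ⁻¹' U) with hC
      have hCA : C ⊆ A := by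
        rintro _ ⟨p, hp, rfl⟩
        exact hNsub (hUN hp)
      have hCG : C ∈ G := by
        rw [hGdef, Filter.mem_map]
        exact Filter.mem_of_superset (Filter.preimage_mem_comap hUnhd)
          (subset_preimage_image h _)
      have hCconn : IsConnected C := by
        have himage : ι '' (ι ⁻¹' U) = U ∩ Yᶜ := by
          rw [Subtype.image_preimage_coe, inter_comm]
        have hpre : IsConnected (ι ⁻¹' U : Set (Yᶜ : Set S)) := by
          constructor
          · obtain ⟨x, hx⟩ := hUconn.nonempty
            exact ⟨⟨x, hx.2⟩, hx.1⟩
          · rw [← Topology.IsInducing.subtypeVal.isPreconnected_image, himage]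
            exact hUconn.isPreconnected
        exact hpre.image h hcont_h.continuousOn
      obtain ⟨c, hc⟩ := hCconn.nonempty
      obtain ⟨z₀, hz₀Y, hcz₀⟩ := mem_iUnion₂.1 (hAW (hCA hc))
      have hCW : C ⊆ W z₀ := by
        set v := ⋃ z ∈ Y \ {z₀}, W z with hv
        have hCuv : C ⊆ W z₀ ∪ v := by
          intro x hx
          obtain ⟨z, hzY, hxz⟩ := mem_iUnion₂.1 (hAW (hCA hx))
          rcases eq_or_ne z z₀ with rfl | hzz
          · exact Or.inl hxz
          · exact Or.inr (mem_biUnion ⟨hzY, hzz⟩ hxz)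
        have hCv : C ∩ v = ∅ := by
          by_contra hne
          obtain ⟨x, hxC, hxv⟩ := Set.nonempty_iff_ne_empty.2 hne
          obtain ⟨x', hx'C, hx'u, hx'v⟩ := hCconn.isPreconnected (W z₀) v (hWo z₀)
            (isOpen_biUnion fun z _ => hWo z) hCuv ⟨c, hc, hcz₀⟩ ⟨x, hxC, hxv⟩
          obtain ⟨z, hzmem, hx'z⟩ := mem_iUnion₂.1 hx'v
          exact Set.disjoint_left.1 (hWdisj z₀ hz₀Y z hzmem.1 (Ne.symm hzmem.2)) hx'u hx'z
        intro x hx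
        rcases hCuv hx with hx' | hx'
        · exact hx'
        · exact absurd (Set.eq_empty_iff_forall_notMem.1 hCv x ⟨hx, hx'⟩) (fun hfalse => hfalse)
      have hzclo : ∀ z', ClusterPt z' G → z' ∈ closure (W z₀) := by
        intro z' hc'
        have hCP : ClusterPt z' (𝓟 C) := hc'.mono (le_principal_iff.2 hCG)
        exact closure_mono hCW (mem_closure_iff_clusterPt.2 hCP)
      have heq : ∀ z', z' ∈ Y → ClusterPt z' G → z' = z₀ := by
        intro z' hz'Y hc'
        by_contra hne
        have hclo := hzclo z' hc'
        obtain ⟨x, hx₁, hx₂⟩ := _root_.mem_closure_iff.1 hclo (W z') (hWo z') (hWmem z' hz'Y)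
        exact Set.disjoint_left.1 (hWdisj z' hz'Y z₀ hz₀Y hne) hx₁ hx₂
      rw [heq z₁ hz₁Y hc₁, heq z₂ hz₂Y hc₂]
    -- conclude convergence
    obtain ⟨z, hz⟩ := exists_clusterPt_of_compactSpace G
    refine ⟨z, hclusY z hz, ?_⟩
    rw [hFydef] at hGdef ⊢
    show map h (comap ι (𝓝 y)) ≤ 𝓝 z
    rw [← hGdef]
    refine Filter.le_iff_ultrafilter.2 fun u hu => ?_
    obtain ⟨x, -, hx⟩ := isCompact_univ.ultrafilter_le_nhds u (by simp)
    have hcx : ClusterPt x G := by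
      have hle : (u : Filter S) ≤ 𝓝 x ⊓ G := le_inf hx hu
      exact neBot_of_le hle
    rw [← huniq x z hcx hz]
    exact hx
  -- define the extension
  choose! z hzY hz using key
  set g : S → S := fun x => if hx : x ∈ Y then z x else h ⟨x, hx⟩ with hg
  have hgY : ∀ x (hx : x ∉ Y), g x = h ⟨x, hx⟩ := fun x hx => dif_neg hx
  have hgval : ∀ x : (Yᶜ : Set S), g (x : S) = (f x : S) := by
    rintro ⟨x, hx⟩
    exact dif_neg hx
  refine ⟨g, ?_, hgval⟩
  rw [continuous_iff_continuousAt]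
  intro x₀
  by_cases hx₀ : x₀ ∈ Y
  · -- continuity at points of Y
    have hval : g x₀ = z x₀ := dif_pos hx₀
    have hsplit : 𝓝 x₀ = 𝓝[Y] x₀ ⊔ 𝓝[Yᶜ] x₀ := by
      rw [← nhdsWithin_union, union_compl_self, nhdsWithin_univ]
    rw [ContinuousAt, hval, hsplit]
    rw [tendsto_sup]
    constructor
    · -- along Y : the trace filter is `pure x₀`
      have hpure : 𝓝[Y] x₀ ≤ pure x₀ := by
        intro s hs
        rw [mem_pure] at hs
        rw [mem_nhdsWithin]
        refine ⟨(Y \ {x₀})ᶜ, hY.diff.isClosed.isOpen_compl, by simp, ?_⟩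
        rintro u ⟨hu₁, hu₂⟩
        have : u = x₀ := by
          by_contra hne
          exact hu₁ ⟨hu₂, hne⟩
        rwa [this]
      have : Tendsto g (pure x₀) (𝓝 (g x₀)) := tendsto_pure_nhds g x₀
      rw [hval] at this
      exact this.mono_left hpure
    · -- along Yᶜ : use the convergence fact
      have hmapF : 𝓝[Yᶜ] x₀ = map ι (comap ι (𝓝 x₀)) := by
        rw [Filter.map_comap, Subtype.range_coe, nhdsWithin]
      rw [hmapF, Filter.tendsto_map'_iff]
      have : (g ∘ ι) = h := by
        funext p
        exact dif_neg p.2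
      rw [this]
      exact hz x₀ hx₀
  · -- continuity at points of Yᶜ
    have hcog : ContinuousOn g (Yᶜ : Set S) := by
      rw [continuousOn_iff_continuous_restrict]
      have : (Yᶜ : Set S).domRestrict g = h := by
        funext p
        exact dif_neg p.2
      rw [this]
      exact hcont_h
    exact hcog.continuousAt (hYo.mem_nhds hx₀)

/-- Any self-homeomorphism of a closed surface minus a finite set of points extends
uniquely to a self-homeomorphism of the surface. -/
theorem homeomorph_extends_of_closed_surface
    (S : Type*) [TopologicalSpace S] [CompactSpace S] [ConnectedSpace S] [T2Space S]
    [SecondCountableTopology S] [ChartedSpace (EuclideanSpace ℝ (Fin 2)) S]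
    (Y : Set S) (hY : Y.Finite)
    (f : (Yᶜ : Set S) ≃ₜ (Yᶜ : Set S)) :
    ∃! F : S ≃ₜ S, ∀ x : (Yᶜ : Set S), F (x : S) = (f x : S) := by
  have hdense : Dense (Yᶜ : Set S) := surface_dense_compl hY
  obtain ⟨g, hgc, hgval⟩ := exists_continuous_extension S Y hY f
  obtain ⟨g', hg'c, hg'val⟩ := exists_continuous_extension S Y hY f.symm
  have hleft : g' ∘ g = id := by
    refine Continuous.ext_on hdense (hg'c.comp hgc) continuous_id ?_
    rintro x hx
    have h1 : g x = (f ⟨x, hx⟩ : S) := hgval ⟨x, hx⟩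
    have h2 : g' ((f ⟨x, hx⟩ : S)) = (f.symm (f ⟨x, hx⟩) : S) := hg'val (f ⟨x, hx⟩)
    simp only [Function.comp_apply, id_eq, h1, h2, f.symm_apply_apply]
  have hright : g ∘ g' = id := by
    refine Continuous.ext_on hdense (hgc.comp hg'c) continuous_id ?_
    rintro x hx
    have h1 : g' x = (f.symm ⟨x, hx⟩ : S) := hg'val ⟨x, hx⟩
    have h2 : g ((f.symm ⟨x, hx⟩ : S)) = (f (f.symm ⟨x, hx⟩) : S) := hgval (f.symm ⟨x, hx⟩)
    simp only [Function.comp_apply, id_eq, h1, h2, f.apply_symm_apply]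
  refine ⟨{ toFun := g, invFun := g',
            left_inv := fun x => congrFun hleft x,
            right_inv := fun x => congrFun hright x,
            continuous_toFun := hgc, continuous_invFun := hg'c }, hgval, ?_⟩
  intro F hF
  have : (F : S → S) = g := by
    refine Continuous.ext_on hdense F.continuous hgc ?_
    intro x hx
    rw [hF ⟨x, hx⟩, hgval ⟨x, hx⟩]
  ext x
  rw [this]
  rfl
end

section
/- Let H be a finite group acting continuously and freely on the circle S¹ (i.e., for each h ∈ H the map x ↦ h·x is continuous, and h·x ≠ x whenever h ≠ 1). Then H is cyclic. -/
open Complex Real Set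

noncomputable section CircleAux

/-- Parametrization of the unit circle in `ℂ` by angle. -/
def ce (θ : ℝ) : Metric.sphere (0 : ℂ) 1 :=
  ⟨Complex.exp (θ * Complex.I), by
    simp [mem_sphere_zero_iff_norm, Complex.norm_exp_ofReal_mul_I]⟩

lemma ce_continuous : Continuous ce := by
  apply Continuous.subtype_mk
  exact Complex.continuous_exp.comp (by continuity)

lemma ce_eq_iff {a b : ℝ} : ce a = ce b ↔ ∃ n : ℤ, a = b + n * (2 * π) := by
  rw [ce, ce, Subtype.mk.injEq, Complex.exp_eq_exp_iff_exists_int]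
  constructor
  · rintro ⟨n, hn⟩
    refine ⟨n, ?_⟩
    have : ((a : ℂ) - (b + n * (2*π))) * Complex.I = 0 := by push_cast at hn ⊢; ring_nf; ring_nf at hn; linear_combination hn
    have h2 := mul_eq_zero.1 this
    rcases h2 with h | h
    · have : (a : ℂ) = ((b + n * (2*π) : ℝ) : ℂ) := by push_cast; linear_combination h
      exact_mod_cast this
    · exact absurd h Complex.I_ne_zero
  · rintro ⟨n, hn⟩
    exact ⟨n, by push_cast [hn]; ring⟩

lemma ce_inj_window {a b : ℝ} (h : |a - b| < 2 * π) : ce a = ce b → a = b := by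
  intro hab
  rcases ce_eq_iff.1 hab with ⟨n, hn⟩
  have hpi := Real.pi_pos
  have : |(n : ℝ)| * (2 * π) < 1 * (2 * π) := by
    calc |(n:ℝ)| * (2*π) = |(n:ℝ) * (2*π)| := by rw [abs_mul, abs_of_pos (by positivity : (0:ℝ) < 2*π)]
    _ = |a - b| := by rw [hn]; ring_nf
    _ < 2 * π := h
    _ = 1 * (2*π) := by ring
  have : |(n:ℝ)| < 1 := lt_of_mul_lt_mul_right this (by positivity)
  have hn0 : n = 0 := by
    have h1 := abs_lt.1 this
    have ha : (-1:ℤ) < n := by exact_mod_cast h1.1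
    have hb : n < 1 := by exact_mod_cast h1.2
    omega
  rw [hn, hn0]; push_cast; ring

lemma ce_surj (x : Metric.sphere (0 : ℂ) 1) : ce (Complex.arg x) = x := by
  have hx : ‖(x : ℂ)‖ = 1 := by
    have := x.2; simpa [mem_sphere_zero_iff_norm] using this
  apply Subtype.ext
  have := Complex.norm_mul_exp_arg_mul_I (x : ℂ)
  rw [hx] at this
  simpa [ce] using this

end CircleAux

noncomputable section ArcAux

local notation "S" => Metric.sphere (0 : ℂ) 1

/-- every point has an angle in any half-open window of length 2π -/
lemma ce_exists_window (a : ℝ) (x : S) : ∃ θ ∈ Ico a (a + 2*π), ce θ = x := by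
  refine ⟨toIcoMod Real.two_pi_pos a (Complex.arg x), toIcoMod_mem_Ico Real.two_pi_pos a _, ?_⟩
  refine Eq.trans ?_ (ce_surj x)
  apply ce_eq_iff.2
  refine ⟨-(toIcoDiv Real.two_pi_pos a (Complex.arg x)), ?_⟩
  have := toIcoMod_sub_self Real.two_pi_pos a (Complex.arg x)
  rw [zsmul_eq_mul] at this
  push_cast at this ⊢
  linarith [this]

lemma ce_ne {s t : ℝ} (hst : s ≠ t) (h : |s - t| < 2*π) : ce s ≠ ce t :=
  fun h' => hst (ce_inj_window h h')

/-- arcs are open -/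
lemma arc_eq_compl {a b : ℝ} (hab : a < b) (hb : b < a + 2*π) :
    ce '' Ioo a b = (ce '' Icc b (a + 2*π))ᶜ := by
  ext x
  simp only [mem_image, mem_compl_iff, not_exists, not_and]
  constructor
  · rintro ⟨s, hs, rfl⟩ t ht hts
    rcases ce_eq_iff.1 hts with ⟨n, hn⟩
    have h1 : t - s > 0 := by linarith [hs.1, hs.2, ht.1, ht.2]
    have h2 : t - s < 2*π := by linarith [hs.1, hs.2, ht.1, ht.2]
    have hn' : (n:ℝ) * (2*π) = t - s := by linarith [hn]
    have : (0:ℝ) < n * (2*π) := hn' ▸ h1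
    have h3 : (0:ℤ) < n := by
      by_contra hc
      push_neg at hc
      have : (n:ℝ) ≤ 0 := by exact_mod_cast hc
      nlinarith [Real.pi_pos]
    have : (1:ℝ) ≤ (n:ℝ) := by exact_mod_cast h3
    nlinarith [Real.pi_pos]
  · intro hx
    obtain ⟨θ, hθ, hθx⟩ := ce_exists_window a x
    have hθa : θ ≠ a := by
      intro h
      apply hx (a + 2*π) ⟨le_of_lt hb, le_refl _⟩
      rw [← hθx, h]
      exact ce_eq_iff.2 ⟨1, by push_cast; ring⟩
    have hθb : θ ∉ Icc b (a + 2*π) := fun hc => hx θ hc hθx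
    refine ⟨θ, ⟨lt_of_le_of_ne hθ.1 (Ne.symm hθa), ?_⟩, hθx⟩
    by_contra hc
    push_neg at hc
    exact hθb ⟨hc, le_of_lt hθ.2⟩
  

lemma arc_isOpen {a b : ℝ} (hab : a < b) (hb : b < a + 2*π) :
    IsOpen (ce '' Ioo a b) := by
  rw [arc_eq_compl hab hb]
  exact (isCompact_Icc.image ce_continuous).isClosed.isOpen_compl

lemma arc_isPreconnected (a b : ℝ) : IsPreconnected (ce '' Ioo a b) :=
  isPreconnected_Ioo.image ce (ce_continuous.continuousOn)

lemma arc_closure {a b : ℝ} (hab : a < b) :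
    closure (ce '' Ioo a b) = ce '' Icc a b := by
  apply le_antisymm
  · exact closure_minimal (image_mono Ioo_subset_Icc_self)
      (isCompact_Icc.image ce_continuous).isClosed
  · rw [← closure_Ioo hab.ne]
    exact image_closure_subset_closure_image ce_continuous

lemma arc_disjoint {a b : ℝ} (hab : a < b) (hb : b < a + 2*π) :
    Disjoint (ce '' Ioo a b) (ce '' Ioo b (a + 2*π)) := by
  rw [Set.disjoint_left]
  rintro x ⟨s, hs, rfl⟩ ⟨t, ht, hts⟩
  have : t ≠ s := by intro h; subst h; linarith [hs.2, ht.1]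
  exact ce_ne this (abs_lt.2 ⟨by linarith [hs.2, ht.1, Real.pi_pos], by linarith [ht.2, hs.1]⟩) hts

lemma arc_cover {a b : ℝ} (hab : a < b) (hb : b < a + 2*π)
    (x : Metric.sphere (0:ℂ) 1) (hxa : x ≠ ce a) (hxb : x ≠ ce b) :
    x ∈ ce '' Ioo a b ∪ ce '' Ioo b (a + 2*π) := by
  obtain ⟨θ, hθ, hθx⟩ := ce_exists_window a x
  have h1 : θ ≠ a := fun h => hxa (by rw [← hθx, h])
  have h2 : θ ≠ b := fun h => hxb (by rw [← hθx, h])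
  rcases lt_or_gt_of_ne h2 with h | h
  · exact Or.inl ⟨θ, ⟨lt_of_le_of_ne hθ.1 (Ne.symm h1), h⟩, hθx⟩
  · exact Or.inr ⟨θ, ⟨h, hθ.2⟩, hθx⟩

/-- confinement: a preconnected set avoiding two points lies in one of the two arcs. -/
lemma arc_confine {a b : ℝ} (hab : a < b) (hb : b < a + 2*π)
    {C : Set (Metric.sphere (0:ℂ) 1)} (hC : IsPreconnected C)
    (hCa : ce a ∉ C) (hCb : ce b ∉ C) :
    C ⊆ ce '' Ioo a b ∨ C ⊆ ce '' Ioo b (a + 2*π) := by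
  have h2 : b < b + 2*π := by linarith [Real.pi_pos]
  have h3 : a + 2*π < b + 2*π := by linarith
  apply hC.subset_or_subset (arc_isOpen hab hb) (arc_isOpen hb (by linarith))
    (arc_disjoint hab hb)
  intro x hx
  exact arc_cover hab hb x (fun h => hCa (h ▸ hx)) (fun h => hCb (h ▸ hx))

lemma ce_inj_Icc {a b : ℝ} (hb : b < a + 2*π) :
    Set.InjOn (fun t => ce t) (Icc a b) := by
  rintro s hs t ht hst
  by_contra hne
  exact ce_ne hne (abs_lt.2 ⟨by linarith [hs.1, ht.2, hb], by linarith [hs.2, ht.1, hb]⟩) hst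

/-- homeo of a closed arc swapping endpoints has a fixed point -/
lemma arc_fixed_point {a b : ℝ} (hab : a < b) (hb : b < a + 2*π)
    {f : Metric.sphere (0:ℂ) 1 → Metric.sphere (0:ℂ) 1} (hf : Continuous f)
    (hK : f '' (ce '' Icc a b) ⊆ ce '' Icc a b)
    (hfa : f (ce a) = ce b) (hfb : f (ce b) = ce a) : ∃ x, f x = x := by
  have hb' : b ≤ a + 2*π := le_of_lt hb
  have hinj := ce_inj_Icc (a := a) (b := b) hb
  -- the closed arc as a subtype, homeomorphic to Icc a b
  set K : Set (Metric.sphere (0:ℂ) 1) := ce '' Icc a b with hKdef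
  have hKc : IsCompact K := isCompact_Icc.image ce_continuous
  let eqv : Icc a b ≃ K :=
    { toFun := fun t => ⟨ce t.1, mem_image_of_mem _ t.2⟩
      invFun := fun x => ⟨Classical.choose x.2, (Classical.choose_spec x.2).1⟩
      left_inv := by
        rintro ⟨t, ht⟩
        have h := Classical.choose_spec (⟨t, ht, rfl⟩ : (⟨ce t, mem_image_of_mem _ ht⟩ : K).1 ∈ K)
        exact Subtype.ext (hinj h.1 ht h.2)
      right_inv := by
        rintro ⟨x, hx⟩
        exact Subtype.ext (Classical.choose_spec hx).2 }
  have heqc : Continuous eqv := by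
    apply Continuous.subtype_mk
    exact ce_continuous.comp continuous_subtype_val
  let E : Icc a b ≃ₜ K := heqc.homeoOfEquivCompactToT2
  -- f restricted to K
  let F : Icc a b → Icc a b := fun t => E.symm ⟨f (E t).1, hK ⟨(E t).1, (E t).2, rfl⟩⟩
  have hFc : Continuous F := by
    apply E.symm.continuous.comp
    apply Continuous.subtype_mk
    exact hf.comp (continuous_subtype_val.comp E.continuous)
  -- endpoints
  have hEa : ∀ (t : ℝ) (ht : t ∈ Icc a b), E ⟨t, ht⟩ = ⟨ce t, mem_image_of_mem _ ht⟩ := fun _ _ => rfl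
  have hmema : a ∈ Icc a b := ⟨le_refl _, hab.le⟩
  have hmemb : b ∈ Icc a b := ⟨hab.le, le_refl _⟩
  have hsymm : ∀ (x : K) (t : ℝ) (ht : t ∈ Icc a b), x.1 = ce t → E.symm x = ⟨t, ht⟩ := by
    intro x t ht hxt
    have h2 : E ⟨t, ht⟩ = x := Subtype.ext (by rw [hEa]; exact hxt.symm)
    rw [← h2, E.symm_apply_apply]
  have hFa : F ⟨a, hmema⟩ = ⟨b, hmemb⟩ := hsymm _ b hmemb hfa
  have hFb : F ⟨b, hmemb⟩ = ⟨a, hmema⟩ := hsymm _ a hmema hfb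
  -- transfer to a real function and apply IVT
  set u : ℝ → ℝ := fun t => if ht : t ∈ Icc a b then (F ⟨t, ht⟩ : ℝ) else t with hu
  have hrestrict : (Icc a b).domRestrict u = fun t : Icc a b => (F t : ℝ) := by
    funext t
    simp only [domRestrict, hu, t.2, dif_pos]
  have hucont : ContinuousOn u (Icc a b) := by
    rw [continuousOn_iff_continuous_restrict, hrestrict]
    exact continuous_subtype_val.comp hFc
  have hiv := intermediate_value_Icc' hab.le ((hucont.sub continuousOn_id) :
    ContinuousOn (fun t => u t - t) (Icc a b))
  have hua : u a = b := by
    have : u a = (F ⟨a, hmema⟩ : ℝ) := by simp only [hu, hmema, dif_pos]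
    rw [this, hFa]
  have hub : u b = a := by
    have : u b = (F ⟨b, hmemb⟩ : ℝ) := by simp only [hu, hmemb, dif_pos]
    rw [this, hFb]
  have h0 : (0:ℝ) ∈ Icc (u b - b) (u a - a) := by
    rw [hua, hub]; constructor <;> [linarith; linarith]
  obtain ⟨t, ht, ht0⟩ := hiv h0
  have hut : u t = t := by linarith [sub_eq_zero.mp ht0]
  have hFt : F ⟨t, ht⟩ = ⟨t, ht⟩ := by
    apply Subtype.ext
    have h5 : (F ⟨t, ht⟩ : ℝ) = u t := by simp only [hu, ht, dif_pos]
    exact h5.trans hut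
  refine ⟨ce t, ?_⟩
  have hEE : (⟨f (E ⟨t, ht⟩).1, hK ⟨(E ⟨t, ht⟩).1, (E ⟨t, ht⟩).2, rfl⟩⟩ : K) = E ⟨t, ht⟩ := by
    have := congrArg E hFt
    rwa [E.apply_symm_apply] at this
  have hval := congrArg Subtype.val hEE
  rw [hEa t ht] at hval
  exact hval
end ArcAux


set_option maxHeartbeats 1600000 in
/-- A finite group acting continuously and freely on the circle `S¹` is cyclic. -/
theorem isCyclic_of_free_continuous_action_on_circle
    (H : Type*) [Group H] [Finite H]
    [MulAction H (Metric.sphere (0 : EuclideanSpace ℝ (Fin 2)) 1)]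
    (hcont : ∀ h : H,
      Continuous fun x : Metric.sphere (0 : EuclideanSpace ℝ (Fin 2)) 1 => h • x)
    (hfree : ∀ (h : H) (x : Metric.sphere (0 : EuclideanSpace ℝ (Fin 2)) 1),
      h ≠ 1 → h • x ≠ x) :
    IsCyclic H := by
  classical
  -- dispose of small groups
  set n := Nat.card H with hn
  have hnpos : 0 < n := Nat.card_pos
  rcases lt_or_ge n 3 with hn3 | hn3
  · interval_cases n
    · have : Subsingleton H := by
        have := Nat.card_eq_one_iff_unique.mp hn.symm
        exact this.1
      exact isCyclic_of_subsingleton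
    · haveI : Fact (Nat.Prime 2) := ⟨Nat.prime_two⟩
      exact isCyclic_of_prime_card hn.symm
  -- transfer the action to the unit circle in ℂ
  set L := Complex.orthonormalBasisOneI.repr with hL
  set ρ : Metric.sphere (0:ℂ) 1 → Metric.sphere (0 : EuclideanSpace ℝ (Fin 2)) 1 :=
    fun x => ⟨L x.1, by
      rw [mem_sphere_zero_iff_norm, L.norm_map]
      exact mem_sphere_zero_iff_norm.mp x.2⟩ with hρ
  set ρi : Metric.sphere (0 : EuclideanSpace ℝ (Fin 2)) 1 → Metric.sphere (0:ℂ) 1 :=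
    fun x => ⟨L.symm x.1, by
      rw [mem_sphere_zero_iff_norm, L.symm.norm_map]
      exact mem_sphere_zero_iff_norm.mp x.2⟩ with hρi
  have hρρi : ∀ x, ρi (ρ x) = x := fun x => Subtype.ext (L.symm_apply_apply x.1)
  have hρiρ : ∀ x, ρ (ρi x) = x := fun x => Subtype.ext (L.apply_symm_apply x.1)
  have hρc : Continuous ρ := Continuous.subtype_mk (L.continuous.comp continuous_subtype_val) _
  have hρic : Continuous ρi := Continuous.subtype_mk (L.symm.continuous.comp continuous_subtype_val) _
  set act : H → Metric.sphere (0:ℂ) 1 → Metric.sphere (0:ℂ) 1 :=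
    fun h x => ρi (h • ρ x) with hact
  have act_one : ∀ x, act 1 x = x := by
    intro x; rw [hact]; simp only [one_smul]; exact hρρi x
  have act_mul : ∀ g h x, act g (act h x) = act (g * h) x := by
    intro g h x
    rw [hact]
    simp only [hρiρ, mul_smul]
  have act_cont : ∀ h, Continuous (act h) := fun h => hρic.comp ((hcont h).comp hρc)
  have act_free : ∀ h x, act h x = x → h = 1 := by
    intro h x hx
    by_contra h1
    apply hfree h (ρ x) h1
    have := congrArg ρ hx
    rwa [hact, hρiρ] at this
  have act_inj : ∀ h x y, act h x = act h y → x = y := by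
    intro h x y hxy
    have := congrArg (act h⁻¹) hxy
    rwa [act_mul, act_mul, inv_mul_cancel, act_one, act_one] at this
  -- the orbit of a base point
  set x₀ : Metric.sphere (0:ℂ) 1 := ce 0 with hx₀
  set O : Set (Metric.sphere (0:ℂ) 1) := Set.range (fun h => act h x₀) with hO
  have hOfin : O.Finite := Set.finite_range _
  have hOmem : ∀ h x, x ∈ O → act h x ∈ O := by
    rintro h x ⟨g, rfl⟩
    exact ⟨h * g, (act_mul h g x₀).symm⟩
  have hOmem' : ∀ h x, act h x ∈ O → x ∈ O := by
    intro h x hx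
    have := hOmem h⁻¹ _ hx
    rwa [act_mul, inv_mul_cancel, act_one] at this
  have hbij : Function.Injective (fun h => act h x₀) := by
    intro g h hgh
    have : act (h⁻¹ * g) x₀ = x₀ := by
      rw [← act_mul]
      simp only at hgh
      rw [hgh, act_mul, inv_mul_cancel, act_one]
    have := act_free _ _ this
    rwa [inv_mul_eq_one, eq_comm] at this
  -- the angles of the orbit
  set T : Finset ℝ := hOfin.toFinset.image (fun x => Complex.arg x.1) with hT
  have hceT : ∀ t ∈ T, ce t ∈ O := by
    intro t ht
    rw [hT, Finset.mem_image] at ht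
    obtain ⟨x, hx, rfl⟩ := ht
    rw [ce_surj]
    exact hOfin.mem_toFinset.mp hx
  have hTIoc : ∀ t ∈ T, t ∈ Ioc (-π) π := by
    intro t ht
    rw [hT, Finset.mem_image] at ht
    obtain ⟨x, _, rfl⟩ := ht
    exact Complex.arg_mem_Ioc x.1
  have hargT : ∀ x ∈ O, Complex.arg x.1 ∈ T := by
    intro x hx
    exact Finset.mem_image_of_mem _ (hOfin.mem_toFinset.mpr hx)
  have hTcard : T.card = n := by
    have hinjOn : Set.InjOn (fun x : Metric.sphere (0:ℂ) 1 => Complex.arg x.1)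
        hOfin.toFinset := by
      intro x _ y _ hxy
      rw [← ce_surj x, ← ce_surj y]
      simp only at hxy
      rw [hxy]
    rw [hT, Finset.card_image_of_injOn hinjOn]
    rw [← Set.ncard_eq_toFinset_card O hOfin, ← Nat.card_coe_set_eq]
    rw [hO, hn]
    exact Nat.card_range_of_injective hbij
  -- the sorted angles
  set α : Fin n → ℝ := fun i => ((T.orderIsoOfFin hTcard) i : ℝ) with hα
  have αmono : StrictMono α := fun i j hij => (T.orderIsoOfFin hTcard).lt_iff_lt.mpr hij
  have αmem : ∀ i, α i ∈ T := fun i => ((T.orderIsoOfFin hTcard) i).2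
  have αIoc : ∀ i, α i ∈ Ioc (-π) π := fun i => hTIoc _ (αmem i)
  have αsurj : ∀ t ∈ T, ∃ i, α i = t := by
    intro t ht
    obtain ⟨i, hi⟩ := (T.orderIsoOfFin hTcard).surjective ⟨t, ht⟩
    exact ⟨i, by simp only [hα, hi]⟩
  haveI : NeZero n := ⟨by omega⟩
  set p : Fin n → Metric.sphere (0:ℂ) 1 := fun i => ce (α i) with hp
  have pmemO : ∀ i, p i ∈ O := fun i => hceT _ (αmem i)
  have pinj : Function.Injective p := by
    intro i j hij
    by_contra hne
    have hne' : α i ≠ α j := fun h => hne (αmono.injective h)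
    refine ce_ne hne' (abs_lt.2 ⟨?_, ?_⟩) hij
    · linarith [(αIoc i).1, (αIoc i).2, (αIoc j).1, (αIoc j).2]
    · linarith [(αIoc i).1, (αIoc i).2, (αIoc j).1, (αIoc j).2]
  have hOp : ∀ x ∈ O, ∃ i, p i = x := by
    intro x hx
    obtain ⟨i, hi⟩ := αsurj _ (hargT x hx)
    exact ⟨i, by rw [hp]; simp only [hi]; exact ce_surj x⟩
  -- cyclic successor on Fin n
  set z0 : Fin n := ⟨0, hnpos⟩ with hz0
  set S1 : Fin n → Fin n := fun i => if h : (i:ℕ)+1 < n then ⟨(i:ℕ)+1, h⟩ else z0 with hS1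
  have S1val : ∀ i : Fin n, ((S1 i : ℕ) = (i:ℕ)+1 ∧ (i:ℕ)+1 < n) ∨ ((S1 i : ℕ) = 0 ∧ (i:ℕ) = n-1) := by
    intro i
    simp only [hS1]
    by_cases h : (i:ℕ)+1 < n
    · rw [dif_pos h]; exact Or.inl ⟨rfl, h⟩
    · rw [dif_neg h]; exact Or.inr ⟨rfl, by have := i.isLt; omega⟩
  have S1inj : Function.Injective S1 := by
    intro i j hij
    have hi := S1val i
    have hj := S1val j
    rw [hij] at hi
    apply Fin.ext
    rcases hi with ⟨h1, h2⟩ | ⟨h1, h2⟩ <;> rcases hj with ⟨h3, h4⟩ | ⟨h3, h4⟩ <;> omega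
  have S1ne : ∀ i, S1 i ≠ i := by
    intro i h
    have hi := S1val i
    rw [h] at hi
    rcases hi with ⟨h1, _⟩ | ⟨h1, h2⟩ <;> omega
  have S1S1ne : ∀ i, S1 (S1 i) ≠ i := by
    intro i h
    have hi := S1val i
    have hj := S1val (S1 i)
    rw [h] at hj
    rcases hi with ⟨h1, h2⟩ | ⟨h1, h2⟩ <;> rcases hj with ⟨h3, h4⟩ | ⟨h3, h4⟩ <;> omega
  -- the successor angle
  set nxt : Fin n → ℝ := fun i => if h : (i:ℕ)+1 < n then α ⟨(i:ℕ)+1, h⟩ else α z0 + 2*π with hnxt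
  have pS1 : ∀ i, ce (nxt i) = p (S1 i) := by
    intro i
    simp only [hnxt, hS1]
    by_cases h : (i:ℕ)+1 < n
    · rw [dif_pos h, dif_pos h]
    · rw [dif_neg h, dif_neg h]
      exact ce_eq_iff.2 ⟨1, by push_cast; ring⟩
  have nxt_gt : ∀ i, α i < nxt i := by
    intro i
    simp only [hnxt]
    by_cases h : (i:ℕ)+1 < n
    · rw [dif_pos h]
      exact αmono (by rw [Fin.lt_def]; show (i:ℕ) < (i:ℕ)+1; omega)
    · rw [dif_neg h]
      have h1 := (αIoc i).2
      have h2 := (αIoc z0).1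
      linarith
  have nxt_lt : ∀ i, nxt i < α i + 2*π := by
    intro i
    simp only [hnxt]
    by_cases h : (i:ℕ)+1 < n
    · rw [dif_pos h]
      have h1 := (αIoc ⟨(i:ℕ)+1, h⟩).2
      have h2 := (αIoc i).1
      linarith
    · rw [dif_neg h]
      have : z0 < i := by rw [Fin.lt_def]; show 0 < (i:ℕ); have := i.isLt; omega
      have := αmono this
      linarith
  have hα0le : ∀ i, α z0 ≤ α i := fun i => αmono.monotone (by rw [Fin.le_def]; exact Nat.zero_le _)
  have nxt_le : ∀ i, nxt i ≤ α z0 + 2*π := by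
    intro i
    simp only [hnxt]
    by_cases h : (i:ℕ)+1 < n
    · rw [dif_pos h]
      have h1 := (αIoc ⟨(i:ℕ)+1, h⟩).2
      have h2 := (αIoc z0).1
      linarith
    · rw [dif_neg h]
  -- the complementary arcs
  set A : Fin n → Set (Metric.sphere (0:ℂ) 1) := fun i => ce '' Ioo (α i) (nxt i) with hA
  have hAO : ∀ i, ∀ x ∈ A i, x ∉ O := by
    rintro i x ⟨s, hs, rfl⟩ hxO
    obtain ⟨j, hj⟩ := hOp _ hxO
    have hsj : s = α j := by
      apply ce_inj_window _ hj.symm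
      have h1 := hα0le i
      have h2 := hα0le j
      have h3 := nxt_le i
      have h4 := (αIoc j).2
      have h5 := (αIoc z0).1
      rw [abs_lt]
      constructor <;> [linarith [hs.1, hs.2]; linarith [hs.1, hs.2]]
    subst hsj
    -- α i < α j < nxt i is impossible
    have hij : i < j := αmono.lt_iff_lt.mp hs.1
    simp only [hnxt] at hs
    by_cases h : (i:ℕ)+1 < n
    · rw [dif_pos h] at hs
      have := αmono.lt_iff_lt.mp hs.2
      rw [Fin.lt_def] at hij this
      simp only at this
      omega
    · have : j ≤ i := by rw [Fin.le_def]; have := j.isLt; omega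
      exact absurd hij (not_lt.mpr this)
  have hcover : ∀ x, x ∉ O → ∃ i, x ∈ A i := by
    intro x hx
    obtain ⟨θ, hθ, hθx⟩ := ce_exists_window (α z0) x
    have hθne : ∀ j, θ ≠ α j := by
      intro j h
      apply hx
      rw [← hθx, h]
      exact pmemO j
    have h0 : z0 ∈ Finset.univ.filter (fun j => α j < θ) := by
      simp only [Finset.mem_filter, Finset.mem_univ, true_and]
      exact lt_of_le_of_ne hθ.1 (Ne.symm (hθne z0))
    set i := (Finset.univ.filter (fun j => α j < θ)).max' ⟨z0, h0⟩ with hi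
    have hiθ : α i < θ := by
      have := Finset.max'_mem (Finset.univ.filter (fun j => α j < θ)) ⟨z0, h0⟩
      simpa using this
    refine ⟨i, θ, ⟨hiθ, ?_⟩, hθx⟩
    simp only [hnxt]
    by_cases h : (i:ℕ)+1 < n
    · rw [dif_pos h]
      have hnotmem : ⟨(i:ℕ)+1, h⟩ ∉ Finset.univ.filter (fun j => α j < θ) := by
        intro hc
        have := Finset.le_max' _ _ hc
        rw [← hi, Fin.le_def] at this
        simp only at this
        omega
      simp only [Finset.mem_filter, Finset.mem_univ, true_and, not_lt] at hnotmem
      exact lt_of_le_of_ne hnotmem (hθne _)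
    · rw [dif_neg h]
      exact hθ.2
  have hpne : ∀ i, p i ≠ p (S1 i) := fun i h => S1ne i (pinj h.symm)
  -- images of points stay in / out of O
  have hactO : ∀ h x, x ∈ O ↔ act h x ∈ O := fun h x => ⟨hOmem h x, hOmem' h x⟩
  -- the adjacency lemma
  have hadj : ∀ (h : H) (i : Fin n), ∃ j, (act h '' A i ⊆ A j) ∧
      ((act h (p i) = p j ∧ act h (p (S1 i)) = p (S1 j)) ∨
       (act h (p i) = p (S1 j) ∧ act h (p (S1 i)) = p j)) := by
    intro h i
    have hCpre : IsPreconnected (act h '' A i) :=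
      (arc_isPreconnected _ _).image _ (act_cont h).continuousOn
    have hCO : ∀ y ∈ act h '' A i, y ∉ O := by
      rintro y ⟨x, hx, rfl⟩ hy
      exact hAO i x hx ((hactO h x).mpr hy)
    have hmid : (α i + nxt i)/2 ∈ Ioo (α i) (nxt i) :=
      Set.mem_Ioo.mpr ⟨by linarith [nxt_gt i], by linarith [nxt_gt i]⟩
    have hAmid : ce ((α i + nxt i)/2) ∈ A i := by
      rw [hA]
      exact mem_image_of_mem _ hmid
    have hcne : act h (ce ((α i + nxt i)/2)) ∈ act h '' A i :=
      mem_image_of_mem _ hAmid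
    obtain ⟨j, hcj⟩ := hcover _ (hCO _ hcne)
    have hsub : act h '' A i ⊆ A j := by
      rcases arc_confine (nxt_gt j) (nxt_lt j) hCpre
        (fun hc => hCO _ hc (pmemO j))
        (fun hc => hCO _ hc (by rw [pS1]; exact pmemO (S1 j))) with hc | hc
      · exact hc
      · exfalso
        have := hc hcne
        exact (Set.disjoint_left.mp (arc_disjoint (nxt_gt j) (nxt_lt j)) hcj) this
    refine ⟨j, hsub, ?_⟩
    -- endpoints map to endpoints
    have hclos : act h '' (ce '' Icc (α i) (nxt i)) ⊆ ce '' Icc (α j) (nxt j) := by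
      rw [← arc_closure (nxt_gt i), ← arc_closure (nxt_gt j)]
      exact (image_closure_subset_closure_image (act_cont h)).trans (closure_mono hsub)
    have hend : ∀ x, x ∈ O → x ∈ ce '' Icc (α j) (nxt j) → x = p j ∨ x = p (S1 j) := by
      rintro x hxO ⟨s, hs, rfl⟩
      rcases eq_or_lt_of_le hs.1 with h1 | h1
      · exact Or.inl (by rw [hp]; rw [← h1])
      rcases eq_or_lt_of_le hs.2 with h2 | h2
      · exact Or.inr (by rw [← pS1, h2])
      · exact absurd hxO (hAO j _ ⟨s, ⟨h1, h2⟩, rfl⟩)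
    have hu : act h (p i) = p j ∨ act h (p i) = p (S1 j) := by
      apply hend _ (hOmem h _ (pmemO i))
      exact hclos ⟨p i, ⟨α i, ⟨le_refl _, (nxt_gt i).le⟩, rfl⟩, rfl⟩
    have hv : act h (p (S1 i)) = p j ∨ act h (p (S1 i)) = p (S1 j) := by
      apply hend _ (hOmem h _ (pmemO (S1 i)))
      refine hclos ⟨p (S1 i), ⟨nxt i, ⟨(nxt_gt i).le, le_refl _⟩, pS1 i⟩, rfl⟩
    have huv : act h (p i) ≠ act h (p (S1 i)) := fun hc => hpne i (act_inj h _ _ hc)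
    rcases hu with hu | hu <;> rcases hv with hv | hv
    · exact absurd (hu.trans hv.symm) huv
    · exact Or.inl ⟨hu, hv⟩
    · exact Or.inr ⟨hu, hv⟩
    · exact absurd (hu.trans hv.symm) huv
  -- no reflection: an element swapping two adjacent points has a fixed point
  have hrefl : ∀ (h : H) (i : Fin n),
      act h (p i) = p (S1 i) → act h (p (S1 i)) = p i → False := by
    intro h i h1 h2
    obtain ⟨j, hsub, hcase⟩ := hadj h i
    rcases hcase with ⟨e1, e2⟩ | ⟨e1, e2⟩
    · -- j = S1 i and S1 (S1 i) = i : impossible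
      have hj : j = S1 i := pinj (e1.symm.trans h1)
      subst hj
      exact S1S1ne i (pinj (e2.symm.trans h2))
    · -- j = i : fixed point via IVT
      have hj : j = i := S1inj (pinj (e1.symm.trans h1))
      subst hj
      have hK : act h '' (ce '' Icc (α j) (nxt j)) ⊆ ce '' Icc (α j) (nxt j) := by
        rw [← arc_closure (nxt_gt j)]
        exact (image_closure_subset_closure_image (act_cont h)).trans (closure_mono hsub)
      obtain ⟨x, hx⟩ := arc_fixed_point (nxt_gt j) (nxt_lt j) (act_cont h) hK
        (by rw [pS1]; exact h1) (by rw [pS1]; exact e2)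
      have := act_free h x hx
      subst this
      rw [act_one] at h1
      exact hpne j h1
  -- the generator
  obtain ⟨a0, ha0'⟩ := pmemO z0
  obtain ⟨a1, ha1'⟩ := pmemO (S1 z0)
  have ha0 : act a0 x₀ = p z0 := ha0'
  have ha1 : act a1 x₀ = p (S1 z0) := ha1' 
  set g : H := a1 * a0⁻¹ with hg
  have hg0 : act g (p z0) = p (S1 z0) := by
    rw [← ha0, act_mul, hg, mul_assoc, inv_mul_cancel, mul_one, ha1]
  have hgne : g ≠ 1 := by
    intro hc
    rw [hc, act_one] at hg0
    exact hpne z0 hg0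
  have hstep : ∀ i, act g (p i) = p (S1 i) → act g (p (S1 i)) = p (S1 (S1 i)) := by
    intro i hi
    obtain ⟨j, _, hcase⟩ := hadj g i
    rcases hcase with ⟨e1, e2⟩ | ⟨e1, e2⟩
    · have hj : j = S1 i := pinj (e1.symm.trans hi)
      subst hj
      exact e2
    · have hj : j = i := S1inj (pinj (e1.symm.trans hi))
      subst hj
      exact absurd e2 (fun hc => hrefl g j hi hc)
  set q : ℕ → Fin n := fun k => S1^[k] z0 with hq
  have hgall : ∀ k, act g (p (q k)) = p (S1 (q k)) := by
    intro k
    induction k with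
    | zero => exact hg0
    | succ k ih =>
      have : q (k+1) = S1 (q k) := Function.iterate_succ_apply' S1 k z0
      rw [this]
      exact hstep (q k) ih
  have hchain : ∀ k, act (g ^ k) (p z0) = p (q k) := by
    intro k
    induction k with
    | zero => rw [pow_zero, act_one]; rfl
    | succ k ih =>
      rw [pow_succ', ← act_mul, ih]
      have : q (k+1) = S1 (q k) := Function.iterate_succ_apply' S1 k z0
      rw [this]
      exact hgall k
  have hqval : ∀ (k : ℕ) (hk : k < n), q k = ⟨k, hk⟩ := by
    intro k
    induction k with
    | zero => intro hk; rfl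
    | succ k ih =>
      intro hk
      have hkn : k < n := by omega
      have : q (k+1) = S1 (q k) := Function.iterate_succ_apply' S1 k z0
      rw [this, ih hkn]
      simp only [hS1]
      rw [dif_pos hk]
  -- conclude
  constructor
  refine ⟨g, fun h => ?_⟩
  have hmem : act h (p z0) ∈ O := hOmem h _ (pmemO z0)
  obtain ⟨i, hi⟩ := hOp _ hmem
  have hik : act (g ^ (i : ℕ)) (p z0) = act h (p z0) := by
    rw [hchain, hqval _ i.isLt, ← hi]
  have : act (h⁻¹ * g ^ (i : ℕ)) (p z0) = p z0 := by
    rw [← act_mul, hik, act_mul, inv_mul_cancel, act_one]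
  have := act_free _ _ this
  have hh : h = g ^ (i : ℕ) := by
    rwa [inv_mul_eq_one] at this
  exact Subgroup.mem_zpowers_iff.mpr ⟨(i : ℕ), by rw [zpow_natCast, hh]⟩
end
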